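/- Let A (n×n), B (n×m), C (p×n), K̄, K̲ (m×n), L̄, L̲ (n×p) be real matrices. The set X = {(x, x̄, x̲) ∈ ℝ^{3n} : 0 ≤ x̲ ≤ x ≤ x̄ entrywise} is invariant under the linear map given by the extended closed-loop matrix T = [[A, BK̄, BK̲], [L̄C, A − L̄C + BK̄, BK̲], [L̲C, BK̄, A − L̲C + BK̲]] if and only if the following six entrywise inequalities hold: A + B(K̄ + K̲) ≥ 0, A + BK̄ ≥ 0, BK̄ ≥ 0, A − L̄C ≥ 0, A − L̲C ≥ 0, and BK̄ + L̲C ≥ 0. -/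

import Mathlib

open Matrix

/-- The extended closed-loop map `(x, x̄, x̲) ↦ T (x, x̄, x̲)` with
`T = [[A, BK̄, BK̲], [L̄C, A − L̄C + BK̄, BK̲], [L̲C, BK̄, A − L̲C + BK̲]]`. -/
def Tmap {n m p : ℕ}
    (A : Matrix (Fin n) (Fin n) ℝ) (B : Matrix (Fin n) (Fin m) ℝ)
    (C : Matrix (Fin p) (Fin n) ℝ)
    (Ku Kl : Matrix (Fin m) (Fin n) ℝ) (Lu Ll : Matrix (Fin n) (Fin p) ℝ)
    (z : (Fin n → ℝ) × (Fin n → ℝ) × (Fin n → ℝ)) :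
    (Fin n → ℝ) × (Fin n → ℝ) × (Fin n → ℝ) :=
  (A *ᵥ z.1 + (B * Ku) *ᵥ z.2.1 + (B * Kl) *ᵥ z.2.2,
   (Lu * C) *ᵥ z.1 + (A - Lu * C + B * Ku) *ᵥ z.2.1 + (B * Kl) *ᵥ z.2.2,
   (Ll * C) *ᵥ z.1 + (B * Ku) *ᵥ z.2.1 + (A - Ll * C + B * Kl) *ᵥ z.2.2)

/-- The order-preserving set `X = {(x, x̄, x̲) : 0 ≤ x̲ ≤ x ≤ x̄ entrywise}`. -/
def orderSet (n : ℕ) : Set ((Fin n → ℝ) × (Fin n → ℝ) × (Fin n → ℝ)) :=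
  {z | (∀ i, 0 ≤ z.2.2 i) ∧ (∀ i, z.2.2 i ≤ z.1 i) ∧ (∀ i, z.1 i ≤ z.2.1 i)}

private lemma mulVec_entry_nonneg {n k : ℕ} {M : Matrix (Fin n) (Fin k) ℝ} {v : Fin k → ℝ}
    (hM : ∀ i j, 0 ≤ M i j) (hv : ∀ j, 0 ≤ v j) (i : Fin n) : 0 ≤ (M *ᵥ v) i := by
  have : 0 ≤ ∑ j, M i j * v j :=
    Finset.sum_nonneg fun j _ => mul_nonneg (hM i j) (hv j)
  simpa [mulVec, dotProduct] using this


/-- **Lemma 1.** The set `X` is invariant under the extended closed-loop dynamics `T`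
if and only if the six entrywise matrix inequalities hold. -/
theorem orderSet_invariant_iff {n m p : ℕ}
    (A : Matrix (Fin n) (Fin n) ℝ) (B : Matrix (Fin n) (Fin m) ℝ)
    (C : Matrix (Fin p) (Fin n) ℝ)
    (Ku Kl : Matrix (Fin m) (Fin n) ℝ) (Lu Ll : Matrix (Fin n) (Fin p) ℝ) :
    (∀ z ∈ orderSet n, Tmap A B C Ku Kl Lu Ll z ∈ orderSet n) ↔
    ((∀ i j, 0 ≤ (A + B * (Ku + Kl)) i j) ∧
     (∀ i j, 0 ≤ (A + B * Ku) i j) ∧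
     (∀ i j, 0 ≤ (B * Ku) i j) ∧
     (∀ i j, 0 ≤ (A - Lu * C) i j) ∧
     (∀ i j, 0 ≤ (A - Ll * C) i j) ∧
     (∀ i j, 0 ≤ (B * Ku + Ll * C) i j)) := by
  constructor
  · intro h
    have he0 : ∀ (j i : Fin n), 0 ≤ (Pi.single j 1 : Fin n → ℝ) i := by
      intro j i
      rcases eq_or_ne i j with rfl | hij
      · simp
      · simp [Pi.single_apply, hij]
    -- z1 = (e, e, e)
    have hz1 : ∀ j : Fin n, (Pi.single j (1:ℝ), Pi.single j (1:ℝ), Pi.single j (1:ℝ)) ∈ orderSet n :=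
      fun j => ⟨he0 j, fun i => le_refl _, fun i => le_refl _⟩
    -- z2 = (e, e, 0)
    have hz2 : ∀ j : Fin n, ((Pi.single j (1:ℝ), Pi.single j (1:ℝ), (0 : Fin n → ℝ))) ∈ orderSet n :=
      fun j => ⟨fun i => le_refl _, fun i => he0 j i, fun i => le_refl _⟩
    -- z3 = (0, e, 0)
    have hz3 : ∀ j : Fin n, (((0 : Fin n → ℝ), Pi.single j (1:ℝ), (0 : Fin n → ℝ))) ∈ orderSet n :=
      fun j => ⟨fun i => le_refl _, fun i => le_refl _, fun i => he0 j i⟩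
    refine ⟨?_, ?_, ?_, ?_, ?_, ?_⟩
    · intro i j
      obtain ⟨H1, _, _⟩ := h _ (hz1 j)
      have := H1 i
      simp only [Tmap, mulVec_single_one, Matrix.col_apply, Pi.add_apply, mul_one, Matrix.sub_apply,
        Matrix.add_apply, Matrix.mul_add] at this ⊢
      linarith
    · intro i j
      obtain ⟨H1, H2, _⟩ := h _ (hz2 j)
      have h1 := H1 i
      have h2 := H2 i
      simp only [Tmap, mulVec_single_one, Matrix.col_apply, Matrix.mulVec_zero, Pi.add_apply, Pi.zero_apply,
        mul_one, Matrix.sub_apply, Matrix.add_apply] at h1 h2 ⊢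
      linarith
    · intro i j
      obtain ⟨H1, H2, _⟩ := h _ (hz3 j)
      have h1 := H1 i
      have h2 := H2 i
      simp only [Tmap, mulVec_single_one, Matrix.col_apply, Matrix.mulVec_zero, Pi.add_apply, Pi.zero_apply,
        mul_one, Matrix.sub_apply, Matrix.add_apply] at h1 h2 ⊢
      linarith
    · intro i j
      obtain ⟨_, _, H3⟩ := h _ (hz3 j)
      have h3 := H3 i
      simp only [Tmap, mulVec_single_one, Matrix.col_apply, Matrix.mulVec_zero, Pi.add_apply, Pi.zero_apply,
        mul_one, Matrix.sub_apply, Matrix.add_apply] at h3 ⊢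
      linarith
    · intro i j
      obtain ⟨_, H2, _⟩ := h _ (hz2 j)
      have h2 := H2 i
      simp only [Tmap, mulVec_single_one, Matrix.col_apply, Matrix.mulVec_zero, Pi.add_apply, Pi.zero_apply,
        mul_one, Matrix.sub_apply, Matrix.add_apply] at h2 ⊢
      linarith
    · intro i j
      obtain ⟨H1, _, _⟩ := h _ (hz2 j)
      have h1 := H1 i
      simp only [Tmap, mulVec_single_one, Matrix.col_apply, Matrix.mulVec_zero, Pi.add_apply, Pi.zero_apply,
        mul_one, Matrix.sub_apply, Matrix.add_apply] at h1 ⊢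
      linarith
  · rintro ⟨c1, c2, c3, c4, c5, c6⟩ z ⟨h0, hlx, hxu⟩
    obtain ⟨x, xu, xl⟩ := z
    simp only [orderSet, Set.mem_setOf_eq, Tmap] at *
    have hxl : ∀ i, 0 ≤ (x - xl) i := fun i => by simpa using sub_nonneg.2 (hlx i)
    have hux : ∀ i, 0 ≤ (xu - x) i := fun i => by simpa using sub_nonneg.2 (hxu i)
    -- identity 1: new lower component
    have id1 : (Ll * C) *ᵥ x + (B * Ku) *ᵥ xu + (A - Ll * C + B * Kl) *ᵥ xl
        = (B * Ku + Ll * C) *ᵥ (x - xl) + (B * Ku) *ᵥ (xu - x) + (A + B * (Ku + Kl)) *ᵥ xl := by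
      simp only [Matrix.add_mulVec, Matrix.sub_mulVec, Matrix.mulVec_sub, Matrix.mul_add]
      abel
    -- identity 2: new x − new lower
    have id2 : (A *ᵥ x + (B * Ku) *ᵥ xu + (B * Kl) *ᵥ xl)
        - ((Ll * C) *ᵥ x + (B * Ku) *ᵥ xu + (A - Ll * C + B * Kl) *ᵥ xl)
        = (A - Ll * C) *ᵥ (x - xl) := by
      simp only [Matrix.add_mulVec, Matrix.sub_mulVec, Matrix.mulVec_sub]
      abel
    -- identity 3: new upper − new x
    have id3 : ((Lu * C) *ᵥ x + (A - Lu * C + B * Ku) *ᵥ xu + (B * Kl) *ᵥ xl)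
        - (A *ᵥ x + (B * Ku) *ᵥ xu + (B * Kl) *ᵥ xl)
        = (A - Lu * C) *ᵥ (xu - x) := by
      simp only [Matrix.add_mulVec, Matrix.sub_mulVec, Matrix.mulVec_sub]
      abel
    refine ⟨?_, ?_, ?_⟩
    · intro i
      have := congrFun id1 i
      have t1 := mulVec_entry_nonneg c6 hxl i
      have t2 := mulVec_entry_nonneg c3 hux i
      have t3 := mulVec_entry_nonneg c1 h0 i
      simp only [Pi.add_apply] at this t1 t2 t3 ⊢
      linarith
    · intro i
      have := congrFun id2 i
      have t := mulVec_entry_nonneg c5 hxl i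
      simp only [Pi.sub_apply, Pi.add_apply] at this t ⊢
      linarith
    · intro i
      have := congrFun id3 i
      have t := mulVec_entry_nonneg c4 hux i
      simp only [Pi.sub_apply, Pi.add_apply] at this t ⊢
      linarith
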